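/- arXiv:0807.3139 — 2 statements merged into one kernel-verified Lean document; each statement's English description precedes it below -/
import Mathlib

section
/- Let ℓ be a prime and 0 ≤ r, s ≤ ℓ-1. With π = (β_r ⊗ id) ⊕ (id ⊗ β_s) : I_r ⊗ I_s → (E_{ℓ-1-r} ⊗ I_s) ⊕ (I_r ⊗ E_{ℓ-1-s}), the image of π has dimension (ℓ+1)² − (r+1)(s+1) over F_ℓ. -/
open MvPolynomial

def homogeneousFns (ℓ n : ℕ) : Submodule (ZMod ℓ) ((Fin 2 → ZMod ℓ) → ZMod ℓ) where
  carrier := {f | f 0 = 0 ∧ ∀ x : ZMod ℓ, x ≠ 0 → ∀ v, f (x • v) = x ^ n * f v}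
  add_mem' := by
    rintro f g ⟨hf0, hf⟩ ⟨hg0, hg⟩
    refine ⟨by simp [hf0, hg0], fun x hx v => ?_⟩
    simp only [Pi.add_apply, hf x hx v, hg x hx v]
    ring
  zero_mem' := ⟨rfl, by simp⟩
  smul_mem' := by
    rintro c f ⟨hf0, hf⟩
    refine ⟨by simp [hf0], fun x hx v => ?_⟩
    simp only [Pi.smul_apply, hf x hx v, smul_eq_mul]
    ring

theorem eval_smul_of_isHomogeneous {R : Type*} [CommRing R] {n : ℕ}
    {P : MvPolynomial (Fin 2) R} (hP : P.IsHomogeneous n) (x : R) (v : Fin 2 → R) :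
    MvPolynomial.eval (x • v) P = x ^ n * MvPolynomial.eval v P := by
  rw [eval_eq', eval_eq', Finset.mul_sum]
  apply Finset.sum_congr rfl
  intro d hd
  have hdeg : ∑ i, d i = n := by
    have := hP (mem_support_iff.mp hd)
    rw [← this]
    simp [Finsupp.weight_apply, Finsupp.sum_fintype]
  calc MvPolynomial.coeff d P * ∏ i, (x • v) i ^ d i
      = MvPolynomial.coeff d P * ∏ i, (x ^ d i * v i ^ d i) := by
        simp [mul_pow]
    _ = MvPolynomial.coeff d P * ((∏ i, x ^ d i) * ∏ i, v i ^ d i) := by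
        rw [Finset.prod_mul_distrib]
    _ = x ^ n * (MvPolynomial.coeff d P * ∏ i, v i ^ d i) := by
        rw [Finset.prod_pow_eq_pow_sum, hdeg]; ring

/-- The evaluation map `α_r : E_r → I_r` as a linear map. -/
noncomputable def alphaMap (ℓ : ℕ) [Fact (Nat.Prime ℓ)] (r : ℕ) :
    ↥(MvPolynomial.homogeneousSubmodule (Fin 2) (ZMod ℓ) r) →ₗ[ZMod ℓ]
      ↥(homogeneousFns ℓ r) where
  toFun P :=
    ⟨fun v => if v = 0 then 0 else MvPolynomial.eval v (P : MvPolynomial (Fin 2) (ZMod ℓ)),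
      by
        refine ⟨by simp, fun x hx v => ?_⟩
        rcases eq_or_ne v 0 with rfl | hv
        · simp
        · have h1 : x • v ≠ 0 := by
            simp [smul_eq_zero, hx, hv]
          show (if x • v = 0 then 0 else MvPolynomial.eval (x • v) (P : MvPolynomial (Fin 2) (ZMod ℓ))) = _
          rw [if_neg h1]
          show _ = x ^ r * (if v = 0 then 0 else MvPolynomial.eval v (P : MvPolynomial (Fin 2) (ZMod ℓ)))
          rw [if_neg hv,
            eval_smul_of_isHomogeneous ((mem_homogeneousSubmodule _ _).mp P.2) x v]⟩
  map_add' P Q := by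
    ext v
    rcases eq_or_ne v 0 with rfl | hv
    · simp
    · simp [hv]
  map_smul' c P := by
    ext v
    rcases eq_or_ne v 0 with rfl | hv
    · simp
    · simp [hv]

/-- The map `β_r : I_r → E_{ℓ-1-r}` as a linear map. -/
noncomputable def betaMap (ℓ : ℕ) [Fact (Nat.Prime ℓ)] (r : ℕ) :
    ↥(homogeneousFns ℓ r) →ₗ[ZMod ℓ]
      ↥(MvPolynomial.homogeneousSubmodule (Fin 2) (ZMod ℓ) (ℓ - 1 - r)) where
  toFun f :=
    ⟨∑ v : Fin 2 → ZMod ℓ, MvPolynomial.C ((f : (Fin 2 → ZMod ℓ) → ZMod ℓ) v) *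
        (MvPolynomial.C (v 1) * X 0 - MvPolynomial.C (v 0) * X 1) ^ (ℓ - 1 - r),
      by
        apply Submodule.sum_mem
        intro v _
        rw [mem_homogeneousSubmodule]
        have hL : ((MvPolynomial.C (v 1) * X 0 - MvPolynomial.C (v 0) * X 1 :
            MvPolynomial (Fin 2) (ZMod ℓ))).IsHomogeneous 1 :=
          ((isHomogeneous_X _ _).C_mul _).sub ((isHomogeneous_X _ _).C_mul _)
        simpa using (hL.pow (ℓ - 1 - r)).C_mul _⟩
  map_add' f g := by
    ext
    simp [C_add, add_mul, Finset.sum_add_distrib]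
  map_smul' c f := by
    ext
    simp [smul_eq_C_mul, Finset.mul_sum, mul_assoc]

set_option synthInstance.maxHeartbeats 400000
set_option maxHeartbeats 1000000

/-- `ι = α_r ⊗ α_s : E_r ⊗ E_s → I_r ⊗ I_s`. -/
noncomputable def iotaTensor (ℓ : ℕ) [Fact (Nat.Prime ℓ)] (r s : ℕ) :
    TensorProduct (ZMod ℓ) ↥(MvPolynomial.homogeneousSubmodule (Fin 2) (ZMod ℓ) r)
        ↥(MvPolynomial.homogeneousSubmodule (Fin 2) (ZMod ℓ) s) →ₗ[ZMod ℓ]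
      TensorProduct (ZMod ℓ) ↥(homogeneousFns ℓ r) ↥(homogeneousFns ℓ s) :=
  TensorProduct.map (alphaMap ℓ r) (alphaMap ℓ s)

/-- `π = (β_r ⊗ id) ⊕ (id ⊗ β_s) : I_{r,s} → U_{r,s}`. -/
noncomputable def piTensor (ℓ : ℕ) [Fact (Nat.Prime ℓ)] (r s : ℕ) :
    TensorProduct (ZMod ℓ) ↥(homogeneousFns ℓ r) ↥(homogeneousFns ℓ s) →ₗ[ZMod ℓ]
      (TensorProduct (ZMod ℓ)
          ↥(MvPolynomial.homogeneousSubmodule (Fin 2) (ZMod ℓ) (ℓ - 1 - r))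
          ↥(homogeneousFns ℓ s)) ×
        (TensorProduct (ZMod ℓ) ↥(homogeneousFns ℓ r)
          ↥(MvPolynomial.homogeneousSubmodule (Fin 2) (ZMod ℓ) (ℓ - 1 - s))) :=
  LinearMap.prod (TensorProduct.map (betaMap ℓ r) LinearMap.id)
    (TensorProduct.map LinearMap.id (betaMap ℓ s))

namespace Stmt11

lemma fin2_finsupp (d : Fin 2 →₀ ℕ) :
    d = Finsupp.single 0 (d 0) + Finsupp.single 1 (d 1) := by
  ext i
  fin_cases i <;> simp [Finsupp.single_apply]

lemma degree_fin2 (d : Fin 2 →₀ ℕ) : d.degree = d 0 + d 1 := by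
  rw [Finsupp.degree_apply, Finset.sum_subset (Finset.subset_univ d.support)]
  · exact Fin.sum_univ_two d
  · intro x _ hx
    simpa using (Finsupp.notMem_support_iff).mp hx

/-- degree pattern for the j-th monomial of degree k -/
noncomputable def dmono (k j : ℕ) : Fin 2 →₀ ℕ :=
  Finsupp.single 0 j + Finsupp.single 1 (k - j)

lemma dmono_apply0 (k j : ℕ) : dmono k j 0 = j := by simp [dmono, Finsupp.single_apply]
lemma dmono_apply1 (k j : ℕ) : dmono k j 1 = k - j := by
  simp [dmono, Finsupp.single_apply]

lemma dmono_eq (k : ℕ) (d : Fin 2 →₀ ℕ) (h : d 0 + d 1 = k) : dmono k (d 0) = d := by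
  conv_rhs => rw [fin2_finsupp d]
  unfold dmono
  congr 2
  omega

lemma dmono_degree (k j : ℕ) (h : j ≤ k) : (dmono k j).degree = k := by
  rw [degree_fin2, dmono_apply0, dmono_apply1]
  omega

noncomputable def monoE (ℓ : ℕ) [Fact (Nat.Prime ℓ)] (k : ℕ) :
    (Fin (k+1) → ZMod ℓ) →ₗ[ZMod ℓ]
      ↥(MvPolynomial.homogeneousSubmodule (Fin 2) (ZMod ℓ) k) where
  toFun c := ⟨∑ j : Fin (k+1), monomial (dmono k j) (c j), by
    apply Submodule.sum_mem
    intro j _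
    rw [mem_homogeneousSubmodule]
    exact isHomogeneous_monomial _ (dmono_degree k j (Nat.lt_succ_iff.mp j.2))⟩
  map_add' c d := by
    ext
    simp [Finset.sum_add_distrib]
  map_smul' a c := by
    ext
    simp [MvPolynomial.smul_monomial, Finset.smul_sum]

lemma monoE_bijective (ℓ : ℕ) [Fact (Nat.Prime ℓ)] (k : ℕ) :
    Function.Bijective (monoE ℓ k) := by
  constructor
  · rw [← LinearMap.ker_eq_bot (M := Fin (k+1) → ZMod ℓ), LinearMap.ker_eq_bot']
    intro c hc
    have h : (∑ j : Fin (k+1), monomial (dmono k j) (c j)) = 0 :=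
      congrArg Subtype.val hc
    funext j0
    have h2 := congrArg (coeff (dmono k j0)) h
    rw [coeff_sum] at h2
    simp only [coeff_monomial, coeff_zero] at h2
    rw [Finset.sum_eq_single j0] at h2
    · simpa using h2
    · intro j _ hj
      rw [if_neg]
      intro hd
      exact hj (Fin.ext (by simpa [dmono_apply0] using congrArg (fun e => e 0) hd))
    · intro h; exact absurd (Finset.mem_univ j0) h
  · rintro ⟨P, hP⟩
    rw [mem_homogeneousSubmodule] at hP
    refine ⟨fun j => coeff (dmono k j) P, ?_⟩
    apply Subtype.ext
    show (∑ j : Fin (k+1), monomial (dmono k j) (coeff (dmono k j) P)) = P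
    apply MvPolynomial.ext
    intro d
    rw [coeff_sum]
    simp only [coeff_monomial]
    by_cases hd : coeff d P = 0
    · rw [hd, Finset.sum_eq_zero]
      intro j _
      split_ifs with h
      · rw [h]; exact hd
      · rfl
    · have hdeg : d 0 + d 1 = k := by
        have := hP hd
        rw [← this]
        simp [Finsupp.weight_apply, Finsupp.sum_fintype, Fin.sum_univ_two]
      have hd0 : d 0 < k + 1 := by omega
      have hkey : dmono k ((⟨d 0, hd0⟩ : Fin (k+1)) : ℕ) = d := dmono_eq k d hdeg
      rw [Finset.sum_eq_single (⟨d 0, hd0⟩ : Fin (k+1))]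
      · rw [if_pos hkey, hkey]
      · intro j _ hj
        rw [if_neg]
        intro hdd
        apply hj
        apply Fin.ext
        have := congrArg (fun e => e 0) (hdd.trans hkey.symm)
        simpa [dmono_apply0] using this
      · intro h; exact absurd (Finset.mem_univ _) h

noncomputable def monoEquivE (ℓ : ℕ) [Fact (Nat.Prime ℓ)] (k : ℕ) :
    (Fin (k+1) → ZMod ℓ) ≃ₗ[ZMod ℓ]
      ↥(MvPolynomial.homogeneousSubmodule (Fin 2) (ZMod ℓ) k) :=
  LinearEquiv.ofBijective (monoE ℓ k) (monoE_bijective ℓ k)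

instance (ℓ : ℕ) [Fact (Nat.Prime ℓ)] (k : ℕ) :
    FiniteDimensional (ZMod ℓ) ↥(MvPolynomial.homogeneousSubmodule (Fin 2) (ZMod ℓ) k) :=
  Module.Finite.equiv (monoEquivE ℓ k)

lemma finrank_E (ℓ : ℕ) [Fact (Nat.Prime ℓ)] (k : ℕ) :
    Module.finrank (ZMod ℓ) ↥(MvPolynomial.homogeneousSubmodule (Fin 2) (ZMod ℓ) k) = k + 1 := by
  rw [← (monoEquivE ℓ k).finrank_eq]
  simp [Module.finrank_fintype_fun_eq_card]

lemma vec2_eq {α : Type*} (v : Fin 2 → α) : v = ![v 0, v 1] := by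
  funext i; fin_cases i <;> rfl

lemma vec2_zero {ℓ : ℕ} (v : Fin 2 → ZMod ℓ) (h0 : v 0 = 0) (h1 : v 1 = 0) : v = 0 := by
  funext i; fin_cases i <;> simp [h0, h1]

/-- coordinates of a homogeneous function: values at (1, t) and at (0, 1) -/
noncomputable def coordI (ℓ : ℕ) [Fact (Nat.Prime ℓ)] (n : ℕ) :
    ↥(homogeneousFns ℓ n) →ₗ[ZMod ℓ] ((ZMod ℓ → ZMod ℓ) × ZMod ℓ) where
  toFun f := (fun t => (f : (Fin 2 → ZMod ℓ) → ZMod ℓ) ![1, t],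
              (f : (Fin 2 → ZMod ℓ) → ZMod ℓ) ![0, 1])
  map_add' f g := by ext <;> rfl
  map_smul' a f := by ext <;> rfl

lemma coordI_bijective (ℓ : ℕ) [Fact (Nat.Prime ℓ)] (n : ℕ) :
    Function.Bijective (coordI ℓ n) := by
  constructor
  · rw [← LinearMap.ker_eq_bot (M := ↥(homogeneousFns ℓ n)), LinearMap.ker_eq_bot']
    rintro ⟨f, hf0, hf⟩ hc
    have h1 : ∀ t, f ![1, t] = 0 := fun t => congrFun (congrArg Prod.fst hc) t
    have h2 : f ![0, 1] = 0 := congrArg Prod.snd hc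
    apply Subtype.ext
    funext v
    show f v = 0
    by_cases hv0 : v 0 = 0
    · by_cases hv1 : v 1 = 0
      · rw [vec2_zero v hv0 hv1]; exact hf0
      · have : v = v 1 • ![0, 1] := by
          funext i; fin_cases i <;> simp [hv0]
        rw [this, hf (v 1) hv1, h2, mul_zero]
    · have : v = v 0 • ![1, (v 0)⁻¹ * v 1] := by
        funext i; fin_cases i
        · simp [mul_inv_cancel₀ hv0]
        · show v 1 = v 0 * ((v 0)⁻¹ * v 1)
          field_simp
      rw [this, hf (v 0) hv0, h1, mul_zero]
  · rintro ⟨g, c⟩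
    classical
    refine ⟨⟨fun v => if v 0 ≠ 0 then (v 0)^n * g ((v 0)⁻¹ * v 1)
        else if v 1 ≠ 0 then (v 1)^n * c else 0, ?_, ?_⟩, ?_⟩
    · simp
    · intro x hx v
      by_cases hv0 : v 0 = 0
      · by_cases hv1 : v 1 = 0
        · have : x • v = 0 := by rw [vec2_zero v hv0 hv1]; simp
          simp [this, hv0, hv1, vec2_zero v hv0 hv1]
        · have e0 : (x • v) 0 = 0 := by simp [hv0]
          have e1 : (x • v) 1 = x * v 1 := rfl
          simp only [e0, e1, ne_eq, not_true_eq_false, if_false, not_not,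
            ite_not, mul_ne_zero hx hv1, hv0]
          simp [mul_ne_zero hx hv1, hv1, mul_pow]
          ring
      · have e0 : (x • v) 0 = x * v 0 := rfl
        have e1 : (x • v) 1 = x * v 1 := rfl
        have hxv : x * v 0 ≠ 0 := mul_ne_zero hx hv0
        simp only [e0, e1, if_pos, hxv, hv0, ne_eq, not_false_eq_true, if_true]
        have : (x * v 0)⁻¹ * (x * v 1) = (v 0)⁻¹ * v 1 := by
          field_simp
        rw [this, mul_pow]
        ring
    · apply Prod.ext
      · funext t
        show (if _ then _ else _) = g t
        norm_num
      · show (if _ then _ else _) = c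
        norm_num

noncomputable def coordIEquiv (ℓ : ℕ) [Fact (Nat.Prime ℓ)] (n : ℕ) :
    ↥(homogeneousFns ℓ n) ≃ₗ[ZMod ℓ] ((ZMod ℓ → ZMod ℓ) × ZMod ℓ) :=
  LinearEquiv.ofBijective (coordI ℓ n) (coordI_bijective ℓ n)

lemma finrank_I (ℓ : ℕ) [Fact (Nat.Prime ℓ)] (n : ℕ) :
    Module.finrank (ZMod ℓ) ↥(homogeneousFns ℓ n) = ℓ + 1 := by
  rw [(coordIEquiv ℓ n).finrank_eq, Module.finrank_prod,
    Module.finrank_fintype_fun_eq_card, Module.finrank_self, ZMod.card]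

end Stmt11


namespace Stmt11

variable (ℓ : ℕ) [Fact (Nat.Prime ℓ)]

lemma two_le : 2 ≤ ℓ := (Fact.out : ℓ.Prime).two_le

/-- the homogeneous function supported on the line `v 1 = t * v 0`. -/
noncomputable def fT (r : ℕ) (t : ZMod ℓ) : ↥(homogeneousFns ℓ r) :=
  ⟨fun v => if v 0 ≠ 0 ∧ v 1 = t * v 0 then (v 0)^r else 0, by
    constructor
    · simp
    · intro x hx v
      show (if (x • v) 0 ≠ 0 ∧ (x • v) 1 = t * ((x • v) 0) then ((x • v) 0) ^ r else 0)
        = x ^ r * (if v 0 ≠ 0 ∧ v 1 = t * v 0 then (v 0) ^ r else 0)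
      by_cases h : v 0 ≠ 0 ∧ v 1 = t * v 0
      · have e0 : (x • v) 0 = x * v 0 := rfl
        have e1 : (x • v) 1 = x * v 1 := rfl
        have h' : (x • v) 0 ≠ 0 ∧ (x • v) 1 = t * ((x • v) 0) := by
          refine ⟨by simp [e0, mul_ne_zero hx h.1], by rw [e0, e1, h.2]; ring⟩
        rw [if_pos h, if_pos h', e0, mul_pow]
      · have h' : ¬ ((x • v) 0 ≠ 0 ∧ (x • v) 1 = t * ((x • v) 0)) := by
          intro hc
          apply h
          have e0 : (x • v) 0 = x * v 0 := rfl
          have e1 : (x • v) 1 = x * v 1 := rfl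
          rw [e0, e1] at hc
          constructor
          · intro h0; rw [h0, mul_zero] at hc; exact hc.1 rfl
          · have hxx : x * v 1 = x * (t * v 0) := by rw [hc.2]; ring
            exact mul_left_cancel₀ hx hxx
        rw [if_neg h, if_neg h', mul_zero]⟩

lemma beta_fT (r : ℕ) (hr : r ≤ ℓ - 1) (t : ZMod ℓ) :
    ((betaMap ℓ r (fT ℓ r t) : MvPolynomial (Fin 2) (ZMod ℓ))) =
      - (C t * X 0 - X 1) ^ (ℓ - 1 - r) := by
  set m := ℓ - 1 - r with hm
  set L : MvPolynomial (Fin 2) (ZMod ℓ) := C t * X 0 - X 1 with hL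
  have hval : ((betaMap ℓ r (fT ℓ r t) : MvPolynomial (Fin 2) (ZMod ℓ))) =
      ∑ v : Fin 2 → ZMod ℓ,
        C ((fT ℓ r t : (Fin 2 → ZMod ℓ) → ZMod ℓ) v) *
          (C (v 1) * X 0 - C (v 0) * X 1) ^ m := rfl
  rw [hval]
  have hterm : ∀ v : Fin 2 → ZMod ℓ,
      C ((fT ℓ r t : (Fin 2 → ZMod ℓ) → ZMod ℓ) v) *
          (C (v 1) * X 0 - C (v 0) * X 1) ^ m =
        if v 0 ≠ 0 ∧ v 1 = t * v 0 then C (v 0) ^ (ℓ - 1) * L ^ m else 0 := by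
    intro v
    by_cases h : v 0 ≠ 0 ∧ v 1 = t * v 0
    · rw [if_pos h]
      have hfv : (fT ℓ r t : (Fin 2 → ZMod ℓ) → ZMod ℓ) v = (v 0)^r := if_pos h
      have hlin : C (v 1) * X 0 - C (v 0) * X 1 = C (v 0) * L := by
        rw [h.2, hL, map_mul]; ring
      rw [hfv, hlin, mul_pow, map_pow, ← mul_assoc, ← pow_add]
      congr 2
      omega
    · rw [if_neg h]
      have hfv : (fT ℓ r t : (Fin 2 → ZMod ℓ) → ZMod ℓ) v = 0 := if_neg h
      rw [hfv, map_zero, zero_mul]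
  rw [Finset.sum_congr rfl (fun v _ => hterm v)]
  -- restrict the sum to the image of `a ↦ ![a, t*a]`
  have hinj : Function.Injective (fun a : ZMod ℓ => (![a, t*a] : Fin 2 → ZMod ℓ)) := by
    intro a b hab
    have := congrFun hab 0
    simpa using this
  rw [← Finset.sum_subset (Finset.subset_univ ((Finset.univ : Finset (ZMod ℓ)).image
      (fun a => (![a, t*a] : Fin 2 → ZMod ℓ)))) ?van]
  case van =>
    intro v _ hv
    rw [if_neg]
    intro hc
    apply hv
    rw [Finset.mem_image]
    exact ⟨v 0, Finset.mem_univ _, by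
      funext i; fin_cases i
      · rfl
      · exact (hc.2).symm⟩
  rw [Finset.sum_image (fun a _ b _ h => hinj h)]
  have hterm2 : ∀ a : ZMod ℓ,
      (if (![a, t*a] : Fin 2 → ZMod ℓ) 0 ≠ 0 ∧ (![a, t*a] : Fin 2 → ZMod ℓ) 1
          = t * (![a, t*a] : Fin 2 → ZMod ℓ) 0 then C ((![a, t*a] : Fin 2 → ZMod ℓ) 0) ^ (ℓ - 1) * L ^ m else 0)
        = if a ≠ 0 then L ^ m else 0 := by
    intro a
    by_cases ha : a ≠ 0
    · rw [if_pos ⟨by simpa using ha, by simp⟩, if_pos ha]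
      have : (![a, t*a] : Fin 2 → ZMod ℓ) 0 = a := rfl
      rw [this, ← map_pow, ZMod.pow_card_sub_one_eq_one ha, map_one, one_mul]
    · rw [if_neg, if_neg ha]
      simp only [not_not] at ha
      simp [ha]
  rw [Finset.sum_congr rfl (fun a _ => hterm2 a)]
  rw [← Finset.sum_filter, Finset.filter_ne', Finset.sum_const,
    Finset.card_erase_of_mem (Finset.mem_univ _)]
  have hcard : (Finset.univ : Finset (ZMod ℓ)).card = ℓ := by
    rw [Finset.card_univ, ZMod.card]
  rw [hcard, nsmul_eq_mul]
  have : ((ℓ - 1 : ℕ) : MvPolynomial (Fin 2) (ZMod ℓ)) = -1 := by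
    have h2 : 2 ≤ ℓ := two_le ℓ
    push_cast [Nat.cast_sub (by omega : 1 ≤ ℓ)]
    simp [CharP.cast_eq_zero]
  rw [this]
  ring

end Stmt11

namespace Stmt11
open Matrix

lemma monomial_dmono {ℓ : ℕ} [Fact (Nat.Prime ℓ)] (k j : ℕ) (c : ZMod ℓ) :
    (monomial (dmono k j) c : MvPolynomial (Fin 2) (ZMod ℓ)) =
      C c * X 0 ^ j * X 1 ^ (k - j) := by
  rw [X_pow_eq_monomial, X_pow_eq_monomial, C_apply, monomial_mul, monomial_mul]
  simp [dmono]

lemma monoE_u (ℓ : ℕ) [Fact (Nat.Prime ℓ)] (m : ℕ) (t : ZMod ℓ) :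
    ((monoE ℓ m (fun j : Fin (m+1) =>
        (-1 : ZMod ℓ)^(m-(j:ℕ)) * (m.choose (j:ℕ)) * t^(j:ℕ)) :
      MvPolynomial (Fin 2) (ZMod ℓ))) = (C t * X 0 - X 1)^m := by
  have hval : ((monoE ℓ m (fun j : Fin (m+1) =>
        (-1 : ZMod ℓ)^(m-(j:ℕ)) * (m.choose (j:ℕ)) * t^(j:ℕ)) :
      MvPolynomial (Fin 2) (ZMod ℓ))) =
      ∑ j : Fin (m+1), monomial (dmono m (j:ℕ))
        ((-1 : ZMod ℓ)^(m-(j:ℕ)) * (m.choose (j:ℕ)) * t^(j:ℕ)) := rfl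
  rw [hval,
    Fin.sum_univ_eq_sum_range (fun j : ℕ => monomial (dmono m j)
      ((-1 : ZMod ℓ)^(m-j) * (m.choose j) * t^j)) (m+1)]
  have hbin : (C t * X 0 - X 1 : MvPolynomial (Fin 2) (ZMod ℓ))^m
      = (C t * X 0 + (- X 1))^m := by ring_nf
  rw [hbin, add_pow]
  apply Finset.sum_congr rfl
  intro j hj
  have hjm : j ≤ m := Nat.lt_succ_iff.mp (Finset.mem_range.mp hj)
  rw [monomial_dmono]
  rw [mul_pow, neg_pow]
  simp only [_root_.map_mul, _root_.map_pow, _root_.map_neg, _root_.map_one, Polynomial.C_eq_natCast, map_natCast]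
  ring

variable (ℓ : ℕ) [Fact (Nat.Prime ℓ)]

lemma beta_surj (r : ℕ) (hr : r ≤ ℓ - 1) : Function.Surjective (betaMap ℓ r) := by
  have h2 : 2 ≤ ℓ := two_le ℓ
  set m := ℓ - 1 - r with hmdef
  have hm : m ≤ ℓ - 1 := by omega
  intro y
  -- coordinates of y
  set b := (monoEquivE ℓ m).symm y with hb
  -- the matrix of coefficient vectors of (C k * X 0 - X 1)^m
  set M : Matrix (Fin (m+1)) (Fin (m+1)) (ZMod ℓ) :=
    fun j k => (-1 : ZMod ℓ)^(m-(j:ℕ)) * (m.choose (j:ℕ)) * ((k:ℕ) : ZMod ℓ)^(j:ℕ) with hM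
  have hdet : IsUnit M.det := by
    have hMfact : M = Matrix.diagonal (fun j : Fin (m+1) =>
        (-1 : ZMod ℓ)^(m-(j:ℕ)) * (m.choose (j:ℕ))) *
        (Matrix.vandermonde (fun k : Fin (m+1) => ((k:ℕ) : ZMod ℓ)))ᵀ := by
      ext j k
      simp [hM, Matrix.diagonal_mul, Matrix.transpose_apply, Matrix.vandermonde_apply]
    have hd1 : (∏ j : Fin (m+1), ((-1 : ZMod ℓ)^(m-(j:ℕ)) * (m.choose (j:ℕ)))) ≠ 0 := by
      apply Finset.prod_ne_zero_iff.mpr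
      intro j _
      apply mul_ne_zero
      · exact pow_ne_zero _ (neg_ne_zero.mpr one_ne_zero)
      · rw [Ne, ZMod.natCast_eq_zero_iff]
        intro hdvd
        have hjm : (j : ℕ) ≤ m := Nat.lt_succ_iff.mp j.2
        have hfac : ℓ ∣ m.factorial := hdvd.trans ⟨(j:ℕ).factorial * (m-(j:ℕ)).factorial, by
          rw [← Nat.choose_mul_factorial_mul_factorial hjm]; ring⟩
        have := ((Fact.out : ℓ.Prime).dvd_factorial).mp hfac
        omega
    have hd2 : (Matrix.vandermonde (fun k : Fin (m+1) => ((k:ℕ) : ZMod ℓ))).det ≠ 0 := by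
      rw [Matrix.det_vandermonde_ne_zero_iff]
      intro a b' hab
      have ha := ZMod.val_cast_of_lt (a := ((a : Fin (m+1)):ℕ)) (by omega : ((a: Fin (m+1)):ℕ) < ℓ)
      have hb' := ZMod.val_cast_of_lt (a := ((b' : Fin (m+1)):ℕ)) (by omega : ((b': Fin (m+1)):ℕ) < ℓ)
      apply Fin.ext
      rw [← ha, ← hb']
      exact congrArg ZMod.val hab
    rw [hMfact, Matrix.det_mul, Matrix.det_transpose, Matrix.det_diagonal]
    exact isUnit_iff_ne_zero.mpr (mul_ne_zero hd1 hd2)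
  set c := M⁻¹.mulVec b with hc
  have hMc : M.mulVec c = b := by
    rw [hc, Matrix.mulVec_mulVec, Matrix.mul_nonsing_inv _ hdet, Matrix.one_mulVec]
  -- expand M.mulVec c as a linear combination of the columns
  have hcols : M.mulVec c = ∑ k : Fin (m+1), c k •
      (fun j : Fin (m+1) => (-1 : ZMod ℓ)^(m-(j:ℕ)) * (m.choose (j:ℕ)) *
        (((k:ℕ) : ZMod ℓ))^(j:ℕ)) := by
    funext j
    rw [Matrix.mulVec, dotProduct]
    rw [Finset.sum_apply]
    apply Finset.sum_congr rfl
    intro k _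
    rw [Pi.smul_apply, smul_eq_mul, hM]
    ring
  -- each column maps to an element of the range of beta
  have hcol_mem : ∀ k : Fin (m+1),
      monoE ℓ m (fun j : Fin (m+1) => (-1 : ZMod ℓ)^(m-(j:ℕ)) * (m.choose (j:ℕ)) *
        (((k:ℕ) : ZMod ℓ))^(j:ℕ)) ∈ LinearMap.range (betaMap ℓ r) := by
    intro k
    refine ⟨- fT ℓ r ((k:ℕ) : ZMod ℓ), ?_⟩
    apply Subtype.ext
    rw [_root_.map_neg]
    show -((betaMap ℓ r (fT ℓ r ((k:ℕ) : ZMod ℓ)) : MvPolynomial (Fin 2) (ZMod ℓ))) = _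
    rw [beta_fT ℓ r hr, monoE_u ℓ m, neg_neg]
  -- conclude
  have hy : y = monoE ℓ m (M.mulVec c) := by
    rw [hMc, hb]
    have : monoE ℓ m ((monoEquivE ℓ m).symm y) = monoEquivE ℓ m ((monoEquivE ℓ m).symm y) := rfl
    rw [this, LinearEquiv.apply_symm_apply]
  have : y ∈ LinearMap.range (betaMap ℓ r) := by
    rw [hy, hcols, _root_.map_sum]
    apply Submodule.sum_mem
    intro k _
    rw [_root_.map_smul]
    exact Submodule.smul_mem _ _ (hcol_mem k)
  exact this

end Stmt11

open Stmt11

/-- For a prime `ℓ` and `0 ≤ r, s ≤ ℓ - 1`, the image of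
`π = (β_r ⊗ id) ⊕ (id ⊗ β_s) : I_r ⊗ I_s → (E_{ℓ-1-r} ⊗ I_s) ⊕ (I_r ⊗ E_{ℓ-1-s})`
has dimension `(ℓ+1)² − (r+1)(s+1)` over `F_ℓ`. -/
theorem piTensor_range_finrank (ℓ : ℕ) [Fact (Nat.Prime ℓ)] (r s : ℕ)
    (hr : r ≤ ℓ - 1) (hs : s ≤ ℓ - 1) :
    Module.finrank (ZMod ℓ) ↥(LinearMap.range (piTensor ℓ r s)) =
      (ℓ + 1) ^ 2 - (r + 1) * (s + 1) := by
  classical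
  have h2 : 2 ≤ ℓ := (Fact.out : ℓ.Prime).two_le
  set A := ↥(homogeneousFns ℓ r) with hA
  set B := ↥(homogeneousFns ℓ s) with hB
  set βr := betaMap ℓ r with hβr
  set βs := betaMap ℓ s with hβs
  set Kr := LinearMap.ker βr with hKr
  set Ks := LinearMap.ker βs with hKs
  -- exact sequences
  have exr : Function.Exact Kr.subtype βr := LinearMap.exact_subtype_ker_map βr
  have exs : Function.Exact Ks.subtype βs := LinearMap.exact_subtype_ker_map βs
  -- kernel of π
  have hkerπ : LinearMap.ker (piTensor ℓ r s) =
      LinearMap.range (LinearMap.rTensor B Kr.subtype) ⊓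
        LinearMap.ker (LinearMap.lTensor A βs) := by
    have e1 : piTensor ℓ r s = LinearMap.prod (LinearMap.rTensor B βr)
        (LinearMap.lTensor A βs) := rfl
    rw [e1, LinearMap.ker_prod]
    congr 1
    exact (Module.Flat.rTensor_exact B exr).linearMap_ker_eq
  have hker2 : LinearMap.range (LinearMap.rTensor B Kr.subtype) ⊓
        LinearMap.ker (LinearMap.lTensor A βs) =
      Submodule.map (LinearMap.rTensor B Kr.subtype)
        (LinearMap.ker ((LinearMap.lTensor A βs) ∘ₗ (LinearMap.rTensor B Kr.subtype))) := by
    rw [LinearMap.ker_comp, Submodule.map_comap_eq]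
  have hker3 : LinearMap.ker ((LinearMap.lTensor A βs) ∘ₗ (LinearMap.rTensor B Kr.subtype)) =
      LinearMap.ker (LinearMap.lTensor (↥Kr) βs) := by
    rw [LinearMap.lTensor_comp_rTensor, ← LinearMap.rTensor_comp_lTensor,
      LinearMap.ker_comp,
      LinearMap.ker_eq_bot_of_injective
        (Module.Flat.rTensor_preserves_injective_linearMap (M := ↥(MvPolynomial.homogeneousSubmodule (Fin 2) (ZMod ℓ) (ℓ - 1 - s))) Kr.subtype (Submodule.injective_subtype Kr)),
      Submodule.comap_bot]
  have hker4 : LinearMap.ker (LinearMap.lTensor (↥Kr) βs) =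
      LinearMap.range (LinearMap.lTensor (↥Kr) Ks.subtype) :=
    (Module.Flat.lTensor_exact (↥Kr) exs).linearMap_ker_eq
  -- finrank of kernels of β
  have hfKr : Module.finrank (ZMod ℓ) ↥Kr = r + 1 := by
    rw [hKr]
    have hrn := LinearMap.finrank_range_add_finrank_ker βr
    rw [LinearMap.range_eq_top.mpr (beta_surj ℓ r hr), finrank_top] at hrn
    rw [finrank_E, finrank_I] at hrn
    omega
  have hfKs : Module.finrank (ZMod ℓ) ↥Ks = s + 1 := by
    rw [hKs]
    have hrn := LinearMap.finrank_range_add_finrank_ker βs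
    rw [LinearMap.range_eq_top.mpr (beta_surj ℓ s hs), finrank_top] at hrn
    rw [finrank_E, finrank_I] at hrn
    omega
  -- finrank of the kernel of π
  have hinjr : Function.Injective (LinearMap.rTensor B Kr.subtype) :=
    Module.Flat.rTensor_preserves_injective_linearMap Kr.subtype (Submodule.injective_subtype Kr)
  have hkerfin : Module.finrank (ZMod ℓ) ↥(LinearMap.ker (piTensor ℓ r s)) = (r + 1) * (s + 1) := by
    rw [hkerπ, hker2]
    have hEq : Module.finrank (ZMod ℓ) ↥(Submodule.map (LinearMap.rTensor B Kr.subtype)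
        (LinearMap.ker ((LinearMap.lTensor A βs) ∘ₗ (LinearMap.rTensor B Kr.subtype)))) =
        Module.finrank (ZMod ℓ)
          ↥(LinearMap.ker ((LinearMap.lTensor A βs) ∘ₗ (LinearMap.rTensor B Kr.subtype))) :=
      ((Submodule.equivMapOfInjective _ hinjr _).finrank_eq).symm
    rw [hEq, hker3, hker4]
    rw [LinearMap.finrank_range_of_inj
      (Module.Flat.lTensor_preserves_injective_linearMap Ks.subtype
        (Submodule.injective_subtype Ks))]
    rw [Module.finrank_tensorProduct, hfKr, hfKs]
  -- rank-nullity for π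
  have hrn := LinearMap.finrank_range_add_finrank_ker (piTensor ℓ r s)
  rw [hkerfin, Module.finrank_tensorProduct, finrank_I, finrank_I] at hrn
  have : (ℓ + 1) * (ℓ + 1) = (ℓ + 1) ^ 2 := (sq (ℓ+1)).symm
  rw [this] at hrn
  exact Nat.eq_sub_of_add_eq hrn
end

section
/- Let ℓ be a prime and 1 ≤ k ≤ ℓ-1. The space of SL₂(F_ℓ)-invariants in E_k = F_ℓ[X,Y]_k, under the action (P·g)(X,Y) = P(g·(X,Y)ᵗ), is zero. -/
open MvPolynomial

noncomputable def matrixSubstAction {R : Type*} [CommRing R]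
    (M : Matrix (Fin 2) (Fin 2) R) (P : MvPolynomial (Fin 2) R) : MvPolynomial (Fin 2) R :=
  MvPolynomial.aeval (fun i => ∑ j : Fin 2, MvPolynomial.C (M i j) * X j) P

lemma eval_matrixSubstAction {ℓ : ℕ} (M : Matrix (Fin 2) (Fin 2) (ZMod ℓ))
    (P : MvPolynomial (Fin 2) (ZMod ℓ)) (v : Fin 2 → ZMod ℓ) :
    eval v (matrixSubstAction M P) = eval (M.mulVec v) P := by
  rw [matrixSubstAction, aeval_def, algebraMap_eq, eval₂_comp_left (eval v)]
  have h1 : (eval v).comp C = RingHom.id (ZMod ℓ) := by ext x; simp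
  rw [h1, eval₂_id]
  have h2 : (⇑(eval v) ∘ fun i => ∑ j : Fin 2, C (M i j) * X j) = M.mulVec v := by
    funext i
    simp [Matrix.mulVec, dotProduct, Fin.sum_univ_two]
  rw [h2]

lemma sl2_transitive (ℓ : ℕ) [Fact ℓ.Prime] (v : Fin 2 → ZMod ℓ) (hv : v ≠ 0) :
    ∃ M : Matrix (Fin 2) (Fin 2) (ZMod ℓ), M.det = 1 ∧ M.mulVec ![1, 0] = v := by
  by_cases h0 : v 0 ≠ 0
  · refine ⟨!![v 0, 0; v 1, (v 0)⁻¹], ?_, ?_⟩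
    · simp only [Matrix.det_fin_two_of, zero_mul, mul_zero, sub_zero]
      exact ZMod.mul_inv_of_unit _ (Ne.isUnit h0)
    · funext i
      fin_cases i <;> simp [Matrix.mulVec, dotProduct, Fin.sum_univ_two]
  · push_neg at h0
    have h1 : v 1 ≠ 0 := by
      intro h1
      apply hv; funext i; fin_cases i <;> simp [h0, h1]
    refine ⟨!![0, -(v 1)⁻¹; v 1, 0], ?_, ?_⟩
    · simp only [Matrix.det_fin_two_of, zero_mul, zero_sub, neg_mul, neg_neg]
      exact ZMod.inv_mul_of_unit _ (Ne.isUnit h1)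
    · funext i
      fin_cases i <;> simp [Matrix.mulVec, dotProduct, Fin.sum_univ_two, h0]

/-- For a prime `ℓ` and `1 ≤ k ≤ ℓ - 1`, the space of `SL₂(F_ℓ)`-invariants
in `E_k = F_ℓ[X,Y]_k` is zero. -/
theorem invariants_homogeneous_eq_zero (ℓ : ℕ) (hℓ : ℓ.Prime) (k : ℕ)
    (hk1 : 1 ≤ k) (hk2 : k ≤ ℓ - 1)
    (P : MvPolynomial (Fin 2) (ZMod ℓ))
    (hP : P ∈ MvPolynomial.homogeneousSubmodule (Fin 2) (ZMod ℓ) k)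
    (hinv : ∀ M : Matrix (Fin 2) (Fin 2) (ZMod ℓ), M.det = 1 → matrixSubstAction M P = P) :
    P = 0 := by
  haveI : Fact ℓ.Prime := ⟨hℓ⟩
  have hℓ2 : 2 ≤ ℓ := hℓ.two_le
  have hℓ1 : ℓ - 1 ≠ 0 := by omega
  rw [MvPolynomial.mem_homogeneousSubmodule] at hP
  -- homogeneous: monomials in support have degree k
  have hdeg : ∀ d : Fin 2 →₀ ℕ, coeff d P ≠ 0 → d.degree = k := by
    intro d hd
    have := hP hd
    rw [Finsupp.degree_eq_weight_one]; exact this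
  -- constant coefficient / eval at zero
  have hP0 : eval (0 : Fin 2 → ZMod ℓ) P = 0 := by
    rw [eval_eq]
    apply Finset.sum_eq_zero
    intro d hd
    rcases eq_or_ne d 0 with rfl | hne
    · exfalso
      have := hdeg 0 (by simpa [mem_support_iff] using hd)
      simp [map_zero] at this
      omega
    · obtain ⟨i, hi⟩ : ∃ i, d i ≠ 0 := by
        by_contra hc
        push_neg at hc
        exact hne (Finsupp.ext fun i => hc i)
      apply mul_eq_zero_of_right
      exact Finset.prod_eq_zero (Finsupp.mem_support_iff.2 hi)
        (by simp [zero_pow hi])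
  -- constancy on nonzero vectors
  set c : ZMod ℓ := eval ![1, 0] P with hc
  have hconst : ∀ v : Fin 2 → ZMod ℓ, v ≠ 0 → eval v P = c := by
    intro v hv
    obtain ⟨M, hM, hMv⟩ := sl2_transitive ℓ v hv
    rw [← hMv, ← eval_matrixSubstAction, hinv M hM]
  -- the indicator polynomial
  set s0 : Fin 2 →₀ ℕ := Finsupp.single 0 (ℓ - 1) with hs0
  set s1 : Fin 2 →₀ ℕ := Finsupp.single 1 (ℓ - 1) with hs1
  set I : MvPolynomial (Fin 2) (ZMod ℓ) :=
    monomial s0 1 + monomial s1 1 - monomial (s0 + s1) 1 with hIdef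
  have heval_m : ∀ (v : Fin 2 → ZMod ℓ) (i : Fin 2) (n : ℕ),
      eval v (monomial (Finsupp.single i n) (1 : ZMod ℓ)) = v i ^ n := by
    intro v i n
    rw [eval_monomial, one_mul, Finsupp.prod_single_index]
    simp
  have heval_I : ∀ v : Fin 2 → ZMod ℓ, v ≠ 0 → eval v I = 1 := by
    intro v hv
    have hsum : eval v (monomial (s0 + s1) (1 : ZMod ℓ)) = v 0 ^ (ℓ-1) * v 1 ^ (ℓ-1) := by
      rw [eval_monomial, one_mul, Finsupp.prod_add_index' (by simp) (fun a b₁ b₂ => pow_add _ _ _)]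
      rw [hs0, hs1, Finsupp.prod_single_index (by simp), Finsupp.prod_single_index (by simp)]
    have h01 : v 0 ≠ 0 ∨ v 1 ≠ 0 := by
      by_contra hcc
      push_neg at hcc
      exact hv (funext fun i => by fin_cases i <;> simp [hcc.1, hcc.2])
    rw [hIdef]
    simp only [map_sub, map_add, hsum]
    simp only [hs0, hs1, heval_m]
    rcases h01 with h | h
    · rw [ZMod.pow_card_sub_one_eq_one h]; ring
    · rw [ZMod.pow_card_sub_one_eq_one h]; ring
  have heval_I0 : eval (0 : Fin 2 → ZMod ℓ) I = 0 := by
    have hsum : eval (0 : Fin 2 → ZMod ℓ) (monomial (s0 + s1) (1 : ZMod ℓ)) = 0 := by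
      rw [eval_monomial, one_mul]
      apply Finset.prod_eq_zero (i := (0 : Fin 2))
      · rw [Finsupp.mem_support_iff]
        simp [hs0, hs1, Finsupp.single_apply, hℓ1]
      · simp [Pi.zero_apply, zero_pow, hs0, hs1, Finsupp.single_apply, hℓ1]
    rw [hIdef]
    simp only [map_sub, map_add, hsum]
    simp only [hs0, hs1, heval_m]
    simp [zero_pow hℓ1]
  -- Q vanishes everywhere
  set Q : MvPolynomial (Fin 2) (ZMod ℓ) := P - C c * I with hQdef
  have hQeval : ∀ v : Fin 2 → ZMod ℓ, eval v Q = 0 := by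
    intro v
    rcases eq_or_ne v 0 with rfl | hv
    · rw [hQdef, map_sub, map_mul, eval_C, hP0, heval_I0, mul_zero, sub_zero]
    · simp [hQdef, hconst v hv, heval_I v hv]
  -- Q has restricted degree
  have hcard : Fintype.card (ZMod ℓ) = ℓ := ZMod.card ℓ
  have hmono_mem : ∀ (s : Fin 2 →₀ ℕ) (a : ZMod ℓ), (∀ i, s i ≤ ℓ - 1) →
      monomial s a ∈ restrictDegree (Fin 2) (ZMod ℓ) (ℓ - 1) := by
    intro s a hs
    rw [mem_restrictDegree]
    intro t ht i
    classical
    rw [support_monomial] at ht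
    rcases eq_or_ne a 0 with rfl | ha
    · simp at ht
    · rw [if_neg ha, Finset.mem_singleton] at ht
      subst ht; exact hs i
  have hQmem : Q ∈ restrictDegree (Fin 2) (ZMod ℓ) (ℓ - 1) := by
    have hPmem : P ∈ restrictDegree (Fin 2) (ZMod ℓ) (ℓ - 1) := by
      rw [mem_restrictDegree]
      intro t ht i
      rw [mem_support_iff] at ht
      have := hdeg t ht
      have hle : t i ≤ t.degree := Finsupp.le_degree i t
      omega
    have hs0le : ∀ i, s0 i ≤ ℓ - 1 := by
      intro i; rw [hs0]; by_cases h : (0 : Fin 2) = i <;> simp [Finsupp.single_apply, h]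
    have hs1le : ∀ i, s1 i ≤ ℓ - 1 := by
      intro i; rw [hs1]; by_cases h : (1 : Fin 2) = i <;> simp [Finsupp.single_apply, h]
    have hsumle : ∀ i, (s0 + s1) i ≤ ℓ - 1 := by
      intro i
      fin_cases i <;>
        simp [hs0, hs1, Finsupp.single_apply]
    have hImem : I ∈ restrictDegree (Fin 2) (ZMod ℓ) (ℓ - 1) := by
      rw [hIdef]
      exact Submodule.sub_mem _ (Submodule.add_mem _ (hmono_mem _ _ hs0le) (hmono_mem _ _ hs1le))
        (hmono_mem _ _ hsumle)
    rw [hQdef]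
    refine Submodule.sub_mem _ hPmem ?_
    rw [← smul_eq_C_mul]
    exact Submodule.smul_mem _ c hImem
  have hQ : Q = 0 := by
    refine eq_zero_of_eval_eq_zero (Fin 2) (ZMod ℓ) Q hQeval ?_
    rw [hcard]
    exact hQmem
  -- deduce P = C c * I, then take the coefficient at s0 + s1 to get c = 0
  have hPI : P = C c * I := by
    rw [hQdef] at hQ
    exact sub_eq_zero.mp hQ
  have deg2 : ∀ f : Fin 2 →₀ ℕ, f.degree = f 0 + f 1 := by
    intro f
    rw [Finsupp.degree_apply, Finset.sum_subset (Finset.subset_univ _)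
      (fun x _ h => by simpa using Finsupp.notMem_support_iff.mp h), Fin.sum_univ_two]
  have hdegs0 : s0.degree = ℓ - 1 := by
    rw [deg2, hs0]; simp [Finsupp.single_apply]
  have hdegs1 : s1.degree = ℓ - 1 := by
    rw [deg2, hs1]; simp [Finsupp.single_apply]
  have hdeg_s : (s0 + s1).degree = (ℓ - 1) + (ℓ - 1) := by
    rw [deg2]
    simp [hs0, hs1, Finsupp.single_apply]
  have hc0 : c = 0 := by
    have h1 : coeff (s0 + s1) P = 0 := by
      by_contra h
      have := hdeg _ h
      omega
    classical
    rw [hPI, coeff_C_mul, hIdef, coeff_sub, coeff_add, coeff_monomial, coeff_monomial,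
      coeff_monomial, if_neg, if_neg, if_pos rfl] at h1
    · simpa using h1
    · intro h
      have := congrArg Finsupp.degree h
      rw [hdegs1, hdeg_s] at this
      omega
    · intro h
      have := congrArg Finsupp.degree h
      rw [hdegs0, hdeg_s] at this
      omega
  rw [hPI, hc0]
  simp
end
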